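/- Let N ≥ 2 and let a ∈ {1,…,N−1} be invertible modulo N, and let [γ₁,γ₂,…,γ_m] be the continued fraction expansion of the rational number a/N ∈ (0,1) (defined recursively by x = 1/(γ₁ + [γ₂,…]) with γ₁ = ⌊1/x⌋). Then 1 + σ(a,N) = γ₁ + γ₂ + ⋯ + γ_m. -/
import Mathlib


/-- The matrix `M(α) = !![0, -1; 1, α]`. -/
def Mmat (a : ℤ) : Matrix (Fin 2) (Fin 2) ℤ := !![0, -1; 1, a]

/-- `IsW a N L` says that `L` is the word `W(a,N)`: a nonempty finite sequence of
integers `≥ 2` whose `M`-product is the matrix `!![-x, -y; a, N]` where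
`y ∈ {1,…,N-1}` satisfies `a*y ≡ 1 (mod N)` and `x = (a*y-1)/N`. -/
def IsW (a N : ℤ) (L : List ℤ) : Prop :=
  L ≠ [] ∧ (∀ x ∈ L, 2 ≤ x) ∧
  ∃ y : ℤ, 1 ≤ y ∧ y ≤ N - 1 ∧ a * y ≡ 1 [ZMOD N] ∧
    (L.map Mmat).prod = !![-((a * y - 1) / N), -y; a, N]

/-- `IsCF x G` says that `G` is the continued fraction expansion of `x ∈ [0,1)`,
defined recursively by `x = 1/(γ₁ + [γ₂,…])` with `γ₁ = ⌊1/x⌋`, the empty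
expansion corresponding to `x = 0`. -/
def IsCF : ℚ → List ℤ → Prop
  | x, [] => x = 0
  | x, g :: t => 0 < x ∧ g = ⌊x⁻¹⌋ ∧ IsCF (x⁻¹ - g) t




lemma isCF_zero {t : List ℤ} (h : IsCF 0 t) : t = [] := by
  cases t with
  | nil => rfl
  | cons g t => exact absurd h.1 (lt_irrefl 0)

lemma isCF_unique : ∀ (G : List ℤ) (x : ℚ) (G' : List ℤ), IsCF x G → IsCF x G' → G = G' := by
  intro G
  induction G with
  | nil =>
    intro x G' h h'
    cases G' with
    | nil => rfl
    | cons g t =>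
      rw [show x = 0 from h] at h'
      exact absurd h'.1 (lt_irrefl 0)
  | cons g t ih =>
    intro x G' h h'
    cases G' with
    | nil =>
      rw [show x = 0 from h'] at h
      exact absurd h.1 (lt_irrefl 0)
    | cons g' t' =>
      obtain ⟨hx, hg, ht⟩ := h
      obtain ⟨hx', hg', ht'⟩ := h'
      have hgg : g = g' := hg.trans hg'.symm
      subst hgg
      rw [ih _ _ ht ht']

lemma floor_int_div (q p : ℤ) (hp : 0 < p) : ⌊(q:ℚ)/(p:ℚ)⌋ = q / p := by
  have hp' : (0:ℚ) < (p:ℚ) := by exact_mod_cast hp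
  rw [Int.floor_eq_iff]
  constructor
  · rw [le_div_iff₀ hp']
    have h1 : (q / p) * p ≤ q := by
      have := Int.emod_add_mul_ediv q p
      have := Int.emod_nonneg q hp.ne'
      nlinarith
    exact_mod_cast h1
  · rw [div_lt_iff₀ hp']
    have h2 : q < (q / p + 1) * p := by
      have := Int.emod_add_mul_ediv q p
      have := Int.emod_lt_of_pos q hp
      nlinarith
    exact_mod_cast h2

lemma exCF_aux : ∀ (n : ℕ) (p q : ℤ), 0 ≤ p → p < q → p ≤ n → ∃ G, IsCF ((p:ℚ)/(q:ℚ)) G := by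
  intro n
  induction n with
  | zero =>
    intro p q h0 hpq hn
    have : p = 0 := le_antisymm (by exact_mod_cast hn) h0
    subst this
    exact ⟨[], by simp [IsCF]⟩
  | succ n ih =>
    intro p q h0 hpq hn
    rcases h0.eq_or_lt with h | h
    · exact ⟨[], by simp [IsCF, ← h]⟩
    · have hq : (0:ℤ) < q := lt_trans h hpq
      have hxpos : (0:ℚ) < (p:ℚ)/(q:ℚ) := by positivity
      have hinv : ((p:ℚ)/(q:ℚ))⁻¹ = (q:ℚ)/(p:ℚ) := by
        rw [inv_div]
      obtain ⟨t, ht⟩ := ih (q % p) p (Int.emod_nonneg q h.ne') (Int.emod_lt_of_pos q h)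
        (by have := Int.emod_lt_of_pos q h; omega)
      refine ⟨(q / p) :: t, hxpos, ?_, ?_⟩
      · rw [hinv, floor_int_div q p h]
      · have : ((p:ℚ)/(q:ℚ))⁻¹ - ((q / p : ℤ) : ℚ) = ((q % p : ℤ):ℚ)/(p:ℚ) := by
          rw [hinv]
          have hp0 : (p:ℚ) ≠ 0 := by positivity
          have hkey : (q:ℚ) = (p:ℚ) * ((q/p : ℤ):ℚ) + ((q % p : ℤ):ℚ) := by
            have h2 : q = p * (q/p) + q % p := by
              have := Int.emod_add_mul_ediv q p; omega
            exact_mod_cast h2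
          field_simp
          linarith [hkey]
        rw [this]
        exact ht

lemma exCF (p q : ℤ) (h0 : 0 ≤ p) (hpq : p < q) : ∃ G, IsCF ((p:ℚ)/(q:ℚ)) G :=
  exCF_aux p.toNat p q h0 hpq (by omega)

lemma reflect_core (p q : ℤ) (hp : 1 ≤ p) (hq : 2*p ≤ q) :
    ∀ G G', IsCF ((p:ℚ)/(q:ℚ)) G → IsCF (((q-p:ℤ):ℚ)/(q:ℚ)) G' → G.sum = G'.sum := by
  intro G G' hG hG'
  have hq0 : (0:ℤ) < q := by omega
  have hp' : (0:ℚ) < (p:ℚ) := by exact_mod_cast hp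
  have hq' : (0:ℚ) < (q:ℚ) := by exact_mod_cast hq0
  rcases eq_or_lt_of_le hq with heq | hlt
  · -- q = 2p : both are 1/2
    have hhalf : ((q-p:ℤ):ℚ)/(q:ℚ) = (p:ℚ)/(q:ℚ) := by
      push_cast
      rw [← heq]
      push_cast
      ring_nf
    rw [hhalf] at hG'
    rw [isCF_unique G _ G' hG hG']
  · -- 2p < q
    have hpq : p < q := by omega
    -- G = γ :: t
    have hxpos : (0:ℚ) < (p:ℚ)/(q:ℚ) := by positivity
    obtain ⟨γ, t, rfl⟩ : ∃ γ t, G = γ :: t := by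
      cases G with
      | nil => exact absurd (show ((p:ℚ)/(q:ℚ)) = 0 from hG) (ne_of_gt hxpos)
      | cons γ t => exact ⟨γ, t, rfl⟩
    obtain ⟨-, hγ, ht⟩ := hG
    have hinv1 : ((p:ℚ)/(q:ℚ))⁻¹ = (q:ℚ)/(p:ℚ) := inv_div _ _
    rw [hinv1] at hγ ht
    rw [floor_int_div q p (by omega)] at hγ
    -- G' = 1 :: (γ-1) :: t
    have hq2 : (0:ℚ) < ((q-p:ℤ):ℚ)/(q:ℚ) := by
      have : (0:ℚ) < ((q-p:ℤ):ℚ) := by exact_mod_cast (by omega : (0:ℤ) < q - p)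
      positivity
    obtain ⟨g1, s, rfl⟩ : ∃ g1 s, G' = g1 :: s := by
      cases G' with
      | nil => exact absurd hG' (ne_of_gt hq2)
      | cons g1 s => exact ⟨g1, s, rfl⟩
    obtain ⟨-, hg1, hs⟩ := hG'
    have hqp' : (0:ℚ) < ((q-p:ℤ):ℚ) := by exact_mod_cast (by omega : (0:ℤ) < q - p)
    have hinv2 : (((q-p:ℤ):ℚ)/(q:ℚ))⁻¹ = (q:ℚ)/((q-p:ℤ):ℚ) := inv_div _ _
    have hlt' : 2*(p:ℚ) < (q:ℚ) := by exact_mod_cast hlt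
    have hfl : ⌊(q:ℚ)/((q-p:ℤ):ℚ)⌋ = 1 := by
      rw [Int.floor_eq_iff]
      constructor
      · rw [le_div_iff₀ hqp']
        push_cast; linarith
      · rw [div_lt_iff₀ hqp']
        push_cast; linarith [hlt']
    have hg1' : g1 = 1 := by rw [hg1, hinv2, hfl]
    subst hg1'
    rw [hinv2] at hs
    have hrem : (q:ℚ)/((q-p:ℤ):ℚ) - ((1:ℤ):ℚ) = (p:ℚ)/((q-p:ℤ):ℚ) := by
      rw [Int.cast_one, div_sub_one (ne_of_gt hqp')]
      congr 1
      push_cast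
      ring
    rw [hrem] at hs
    have hspos : (0:ℚ) < (p:ℚ)/((q-p:ℤ):ℚ) := by positivity
    obtain ⟨g2, t', rfl⟩ : ∃ g2 t', s = g2 :: t' := by
      cases s with
      | nil => exact absurd hs (ne_of_gt hspos)
      | cons g2 t' => exact ⟨g2, t', rfl⟩
    obtain ⟨-, hg2, ht'⟩ := hs
    have hinv3 : ((p:ℚ)/((q-p:ℤ):ℚ))⁻¹ = ((q-p:ℤ):ℚ)/(p:ℚ) := inv_div _ _
    rw [hinv3] at hg2 ht'
    rw [floor_int_div (q-p) p (by omega)] at hg2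
    -- g2 = q/p - 1
    have hg2' : g2 = q / p - 1 := by
      rw [hg2]
      have h1 : q - p = q + (-1) * p := by ring
      rw [h1, Int.add_mul_ediv_right _ _ (by omega : p ≠ 0)]
      ring
    -- tails are equal
    have htail : ((q-p:ℤ):ℚ)/(p:ℚ) - ((g2:ℤ):ℚ) = (q:ℚ)/(p:ℚ) - ((γ:ℤ):ℚ) := by
      rw [hg2', hγ]
      push_cast
      field_simp
      ring
    rw [htail] at ht'
    have := isCF_unique t _ t' ht ht'
    subst this
    simp [hγ, hg2']
    omega

lemma reflect (p q : ℤ) (hp : 1 ≤ p) (hq : p ≤ q - 1) :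
    ∀ G G', IsCF ((p:ℚ)/(q:ℚ)) G → IsCF (((q-p:ℤ):ℚ)/(q:ℚ)) G' → G.sum = G'.sum := by
  intro G G' hG hG'
  rcases le_or_gt (2*p) q with h | h
  · exact reflect_core p q hp h G G' hG hG'
  · have h2 : ((q-(q-p):ℤ):ℚ)/(q:ℚ) = (p:ℚ)/(q:ℚ) := by norm_num
    refine (reflect_core (q-p) q (by omega) (by omega) G' G hG' ?_).symm
    rw [h2]
    exact hG

lemma Mmat_inv (α : ℤ) : Mmat α * !![α, 1; -1, 0] = 1 := by
  rw [Mmat, Matrix.mul_fin_two]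
  norm_num
  exact Matrix.one_fin_two.symm

lemma main_lemma (L : List ℤ) : L ≠ [] → (∀ α ∈ L, 2 ≤ α) →
    ∀ x y a N : ℤ, (L.map Mmat).prod = !![-x, -y; a, N] →
    (0 ≤ x ∧ x + 1 ≤ y ∧ x + 1 ≤ a ∧ y + 1 ≤ N ∧ a + y ≤ N + x ∧ a*y - x*N = 1) ∧
    ∀ G, IsCF ((a:ℚ)/(N:ℚ)) G → 1 + (L.map (fun z => z - 1)).sum = G.sum := by
  induction L using List.reverseRecOn with
  | nil => intro h; exact absurd rfl h
  | append_singleton L' α ih =>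
    intro _ hge x y a N hprod
    have hα : 2 ≤ α := hge α (by simp)
    rw [List.map_append, List.prod_append] at hprod
    simp only [List.map_cons, List.map_nil, List.prod_cons, List.prod_nil, mul_one] at hprod
    rcases eq_or_ne L' [] with rfl | hne
    · -- base case: L = [α]
      simp only [List.map_nil, List.prod_nil, one_mul] at hprod
      have h00 := congrFun (congrFun hprod 0) 0
      have h01 := congrFun (congrFun hprod 0) 1
      have h10 := congrFun (congrFun hprod 1) 0
      have h11 := congrFun (congrFun hprod 1) 1
      simp [Mmat] at h00 h01 h10 h11
      have hx : x = 0 := by omega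
      have hy : y = 1 := by omega
      have ha : a = 1 := h10.symm
      have hN : N = α := h11.symm
      subst hx; subst hy; subst ha; subst hN
      refine ⟨⟨le_refl 0, by omega, by omega, by omega, by omega, by ring⟩, ?_⟩
      intro G hG
      have hN' : (0:ℚ) < (N:ℚ) := by exact_mod_cast (by omega : (0:ℤ) < N)
      have hxpos : (0:ℚ) < ((1:ℤ):ℚ)/(N:ℚ) := by positivity
      obtain ⟨g, t, rfl⟩ : ∃ g t, G = g :: t := by
        cases G with
        | nil => exact absurd hG (ne_of_gt hxpos)
        | cons g t => exact ⟨g, t, rfl⟩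
      obtain ⟨-, hg, ht⟩ := hG
      have hinv : (((1:ℤ):ℚ)/(N:ℚ))⁻¹ = (N:ℚ) := by
        push_cast; rw [inv_div]; simp
      rw [hinv] at hg ht
      rw [Int.floor_intCast] at hg
      have hrem : (N:ℚ) - ((g:ℤ):ℚ) = 0 := by rw [hg]; simp
      rw [hrem] at ht
      rw [isCF_zero ht, hg]
      simp
    · -- inductive step
      have hP : (L'.map Mmat).prod = !![-(α*x - y), -x; α*a - N, a] := by
        have h1 : (L'.map Mmat).prod = (L'.map Mmat).prod * (Mmat α * !![α, 1; -1, 0]) := by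
          rw [Mmat_inv]; simp
        rw [← mul_assoc, hprod] at h1
        rw [h1, Matrix.mul_fin_two]
        congr 1 <;> ring_nf
      obtain ⟨⟨i1, i2, i3, i4, i5, i6⟩, ihcf⟩ :=
        ih hne (fun β hβ => hge β (by simp [hβ])) (α*x - y) x (α*a - N) a hP
      have hα2 : (0:ℤ) ≤ α - 2 := by omega
      have inv1 : 0 ≤ x := by omega
      have inv2 : x + 1 ≤ y := by nlinarith
      have inv3 : x + 1 ≤ a := by omega
      have inv4 : y + 1 ≤ N := by nlinarith
      have inv5 : a + y ≤ N + x := by nlinarith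
      have inv6 : a*y - x*N = 1 := by linarith [i6]
      refine ⟨⟨inv1, inv2, inv3, inv4, inv5, inv6⟩, ?_⟩
      intro G hG
      -- bounds
      have hb1 : 1 ≤ α*a - N := by omega
      have hb2 : α*a - N ≤ a - 1 := by omega
      have ha1 : 1 ≤ a := by omega
      have hN2 : 2 ≤ N := by omega
      have ha' : (0:ℚ) < (a:ℚ) := by exact_mod_cast (by omega : (0:ℤ) < a)
      have hN' : (0:ℚ) < (N:ℚ) := by exact_mod_cast (by omega : (0:ℤ) < N)
      have hxpos : (0:ℚ) < (a:ℚ)/(N:ℚ) := by positivity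
      obtain ⟨g, t, rfl⟩ : ∃ g t, G = g :: t := by
        cases G with
        | nil => exact absurd hG (ne_of_gt hxpos)
        | cons g t => exact ⟨g, t, rfl⟩
      obtain ⟨-, hg, ht⟩ := hG
      have hinv : ((a:ℚ)/(N:ℚ))⁻¹ = (N:ℚ)/(a:ℚ) := inv_div _ _
      rw [hinv] at hg ht
      -- floor = α - 1
      have hb1' : ((α*a - N:ℤ):ℚ) ≥ 1 := by exact_mod_cast hb1
      have hb2' : ((α*a - N:ℤ):ℚ) ≤ (a:ℚ) - 1 := by
        have : ((α*a - N:ℤ):ℚ) ≤ ((a - 1:ℤ):ℚ) := by exact_mod_cast hb2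
        push_cast at this ⊢; linarith
      have hfl : ⌊(N:ℚ)/(a:ℚ)⌋ = α - 1 := by
        rw [Int.floor_eq_iff]
        constructor
        · rw [le_div_iff₀ ha']
          push_cast at hb2' ⊢
          linarith
        · rw [div_lt_iff₀ ha']
          push_cast at hb1' ⊢
          linarith
      rw [hfl] at hg
      subst hg
      -- remainder
      have hrem : (N:ℚ)/(a:ℚ) - ((α - 1 : ℤ):ℚ) = ((a - (α*a - N):ℤ):ℚ)/(a:ℚ) := by
        field_simp
        push_cast
        ring
      rw [hrem] at ht
      -- existence of CF for (α*a-N)/a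
      obtain ⟨G', hG'⟩ := exCF (α*a - N) a (by omega) (by omega)
      have hsum' : 1 + (L'.map (fun z => z - 1)).sum = G'.sum := ihcf G' hG'
      have hrefl : G'.sum = t.sum := by
        have := reflect (α*a - N) a (by omega) (by omega) G' t hG' (by
          have : ((a - (α*a - N):ℤ):ℚ) = ((a - (α*a - N):ℤ):ℚ) := rfl
          exact ht)
        exact this
      simp only [List.map_append, List.map_cons, List.map_nil, List.sum_append,
        List.sum_cons, List.sum_nil, add_zero]
      omega

theorem stmt19 (N a : ℤ) (hN : 2 ≤ N) (ha : 1 ≤ a) (ha' : a ≤ N - 1)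
    (hcop : IsCoprime a N) (L : List ℤ) (hL : IsW a N L)
    (G : List ℤ) (hG : IsCF ((a : ℚ) / (N : ℚ)) G) :
    1 + (L.map (fun x => x - 1)).sum = G.sum := by
  obtain ⟨hne, hge, y, hy1, hy2, hcong, hprod⟩ := hL
  exact (main_lemma L hne hge ((a * y - 1) / N) y a N hprod).2 G hG
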